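/- Let z₁,…,z_m ∈ ℝ^ℓ and σ₁ > σ₂ > 0, σ₃,…,σ_m > 0, and suppose S = Σ_{l=1}^m σ_l² z_l z_lᵀ is invertible, as is the matrix S' obtained from S by swapping σ₁ and σ₂ (i.e., S' = S + (σ₂²−σ₁²) z₁ z₁ᵀ + (σ₁²−σ₂²) z₂ z₂ᵀ). If additionally z₂ᵀ (S − σ₁² z₁ z₁ᵀ)⁻¹ z₁ ≠ 0 and S − σ₁² z₁ z₁ᵀ, S' − σ₂² z₁ z₁ᵀ are positive definite, then σ₂² z₁ᵀ (S')⁻¹ z₁ < σ₁² z₁ᵀ S⁻¹ z₁. -/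

import Mathlib

open Matrix Finset

lemma vecMulVec_mulVec' {n : Type*} [Fintype n] (x y w : n → ℝ) :
    (vecMulVec x y) *ᵥ w = (y ⬝ᵥ w) • x := by
  ext i
  simp [vecMulVec_apply, mulVec, dotProduct, Finset.sum_mul, Finset.mul_sum, mul_comm,
    mul_left_comm]

lemma inv_mulVec_of {n : Type*} [Fintype n] [DecidableEq n] {M : Matrix n n ℝ}
    (hM : IsUnit M.det) {w y : n → ℝ} (h : M *ᵥ w = y) : M⁻¹ *ᵥ y = w := by
  rw [← h, Matrix.mulVec_mulVec, Matrix.nonsing_inv_mul _ hM, Matrix.one_mulVec]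

lemma symm_dot {n : Type*} [Fintype n] {M : Matrix n n ℝ} (hM : Mᵀ = M) (x y : n → ℝ) :
    x ⬝ᵥ M *ᵥ y = y ⬝ᵥ M *ᵥ x := by
  rw [Matrix.dotProduct_mulVec, ← Matrix.mulVec_transpose, hM, dotProduct_comm]

lemma SM_dot {n : Type*} [Fintype n] [DecidableEq n] {A M : Matrix n n ℝ}
    (hA : IsUnit A.det) (hMd : IsUnit M.det) (c : ℝ) (y : n → ℝ)
    (hM : M = A + c • vecMulVec y y)
    (hden : 1 + c * (y ⬝ᵥ A⁻¹ *ᵥ y) ≠ 0) :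
    y ⬝ᵥ M⁻¹ *ᵥ y = (y ⬝ᵥ A⁻¹ *ᵥ y) / (1 + c * (y ⬝ᵥ A⁻¹ *ᵥ y)) := by
  set u := A⁻¹ *ᵥ y with hu
  set a := y ⬝ᵥ u with ha
  have hAu : A *ᵥ u = y := by
    rw [hu, Matrix.mulVec_mulVec, Matrix.mul_nonsing_inv _ hA, Matrix.one_mulVec]
  have key : M *ᵥ ((1 + c * a)⁻¹ • u) = y := by
    rw [Matrix.mulVec_smul, hM, Matrix.add_mulVec, hAu, Matrix.smul_mulVec,
      vecMulVec_mulVec', ← ha]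
    rw [smul_smul, smul_add, smul_smul]
    have : (1 + c * a)⁻¹ * (c * a) = 1 - (1 + c * a)⁻¹ := by
      field_simp; ring
    rw [this]
    ext i
    simp [sub_smul]
  rw [inv_mulVec_of hMd key, dotProduct_smul, ← ha]
  simp only [smul_eq_mul]
  rw [inv_mul_eq_div]

/-- Swapping the two largest weights σ₁² and σ₂² (attached to z₁, z₂) strictly
decreases the quadratic form σ₁² z₁ᵀ S⁻¹ z₁, under the stated nondegeneracy
conditions. Here index 0 plays the role of 1, and index 1 the role of 2. -/
theorem stmt6 (m l : ℕ) (hl : l < m + 2) (z : Fin (m + 2) → Fin l → ℝ)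
    (σ : Fin (m + 2) → ℝ) (hσpos : ∀ i, 0 < σ i) (hσ01 : σ 1 < σ 0)
    (S S' : Matrix (Fin l) (Fin l) ℝ)
    (hS : S = ∑ t, σ t ^ 2 • vecMulVec (z t) (z t))
    (hS' : S' = S + (σ 1 ^ 2 - σ 0 ^ 2) • vecMulVec (z 0) (z 0)
        + (σ 0 ^ 2 - σ 1 ^ 2) • vecMulVec (z 1) (z 1))
    (hSinv : IsUnit S.det) (hS'inv : IsUnit S'.det)
    (hBpd : (S - σ 0 ^ 2 • vecMulVec (z 0) (z 0)).PosDef)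
    (hB'pd : (S' - σ 1 ^ 2 • vecMulVec (z 0) (z 0)).PosDef)
    (hnz : z 1 ⬝ᵥ (S - σ 0 ^ 2 • vecMulVec (z 0) (z 0))⁻¹.mulVec (z 0) ≠ 0) :
    σ 1 ^ 2 * (z 0 ⬝ᵥ S'⁻¹.mulVec (z 0)) < σ 0 ^ 2 * (z 0 ⬝ᵥ S⁻¹.mulVec (z 0)) := by
  have hσ1 := hσpos 1
  have hσ0 := hσpos 0
  set B := S - σ 0 ^ 2 • vecMulVec (z 0) (z 0) with hB
  set B' := S' - σ 1 ^ 2 • vecMulVec (z 0) (z 0) with hB2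
  set δ := σ 0 ^ 2 - σ 1 ^ 2 with hδdef
  have hδ : 0 < δ := by rw [hδdef]; nlinarith
  have hSB : S = B + σ 0 ^ 2 • vecMulVec (z 0) (z 0) := by rw [hB]; abel
  have hS'B : S' = B' + σ 1 ^ 2 • vecMulVec (z 0) (z 0) := by rw [hB2]; abel
  have hBB' : B' = B + δ • vecMulVec (z 1) (z 1) := by
    rw [hB2, hS', hB, hδdef]; module
  have hBd : IsUnit B.det := hBpd.det_pos.ne'.isUnit
  have hB'd : IsUnit B'.det := hB'pd.det_pos.ne'.isUnit
  have hBinv := hBpd.inv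
  have hB'inv := hB'pd.inv
  set u := B⁻¹ *ᵥ z 0 with hu
  set v := B⁻¹ *ᵥ z 1 with hv
  set a := z 0 ⬝ᵥ u with ha
  set b := z 1 ⬝ᵥ v with hb
  set c := z 1 ⬝ᵥ u with hc
  have hz0 : z 0 ≠ 0 := by
    intro h; exact hnz (by simp [hc, hu, h])
  have hz1 : z 1 ≠ 0 := by
    intro h; exact hnz (by simp [hc, h])
  have hapos : 0 < a := by
    have := hBinv.dotProduct_mulVec_pos hz0
    simpa [ha, hu, star_trivial] using this
  have hbpos : 0 < b := by
    have := hBinv.dotProduct_mulVec_pos hz1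
    simpa [hb, hv, star_trivial] using this
  have hBu : B *ᵥ u = z 0 := by
    rw [hu, Matrix.mulVec_mulVec, Matrix.mul_nonsing_inv _ hBd, Matrix.one_mulVec]
  have hBv : B *ᵥ v = z 1 := by
    rw [hv, Matrix.mulVec_mulVec, Matrix.mul_nonsing_inv _ hBd, Matrix.one_mulVec]
  have hden : 0 < 1 + δ * b := by positivity
  have hz0v : z 0 ⬝ᵥ v = c := by
    rw [hc, hu, hv]
    refine symm_dot ?_ _ _
    have h1 : (B⁻¹)ᴴ = B⁻¹ := hBinv.isHermitian
    rwa [Matrix.conjTranspose_eq_transpose_of_trivial] at h1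
  have hw : B' *ᵥ (u - (δ * c / (1 + δ * b)) • v) = z 0 := by
    rw [hBB', Matrix.add_mulVec, Matrix.mulVec_sub, Matrix.mulVec_smul, hBu, hBv,
      Matrix.smul_mulVec, vecMulVec_mulVec', dotProduct_sub, dotProduct_smul, ← hb, ← hc]
    have h1 : (1 + δ * b) ≠ 0 := ne_of_gt hden
    ext i
    simp only [Pi.add_apply, Pi.sub_apply, Pi.smul_apply, smul_eq_mul]
    field_simp
    ring
  have ha' : z 0 ⬝ᵥ B'⁻¹ *ᵥ z 0 = a - δ * c / (1 + δ * b) * c := by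
    rw [inv_mulVec_of hB'd hw, dotProduct_sub, dotProduct_smul, ← ha, hz0v, smul_eq_mul]
  set a' := z 0 ⬝ᵥ B'⁻¹ *ᵥ z 0 with ha'def
  have hc2 : 0 < c ^ 2 := pow_two_pos_of_ne_zero hnz
  have ha'lt : a' < a := by
    rw [ha']
    have : 0 < δ * c / (1 + δ * b) * c := by
      rw [div_mul_eq_mul_div, mul_assoc, ← sq]
      positivity
    linarith
  have ha'pos : 0 < a' := by
    have := hB'inv.dotProduct_mulVec_pos hz0
    simpa [ha'def, star_trivial] using this
  have hdenS : (1 : ℝ) + σ 0 ^ 2 * a ≠ 0 := by positivity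
  have hdenS' : (1 : ℝ) + σ 1 ^ 2 * a' ≠ 0 := by positivity
  have e1 : z 0 ⬝ᵥ S⁻¹ *ᵥ z 0 = a / (1 + σ 0 ^ 2 * a) :=
    SM_dot hBd hSinv _ _ hSB (by rw [← hu, ← ha]; exact hdenS)
  have e2 : z 0 ⬝ᵥ S'⁻¹ *ᵥ z 0 = a' / (1 + σ 1 ^ 2 * a') :=
    SM_dot hB'd hS'inv _ _ hS'B (by rw [← ha'def]; exact hdenS')
  rw [e1, e2]
  rw [mul_div_assoc', mul_div_assoc', div_lt_div_iff₀ (by positivity) (by positivity)]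
  nlinarith [mul_pos hapos ha'pos, sq_nonneg (σ 0 * σ 1)]
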